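/- arXiv:1302.3783 — 2 statements merged into one kernel-verified Lean document; each statement's English description precedes it below -/
import Mathlib

section
/- Two binary words u, v ∈ {0,1}* are 2-Abelian equivalent (i.e., |u|_x = |v|_x for all words x of length at most 2) if and only if |u| = |v|, |u|_{00} = |v|_{00}, |u|_{11} = |v|_{11}, and u and v have the same first letter (or are both empty). -/
/-- Number of occurrences of `x` as a factor of `u`. -/
def occ {α : Type*} [DecidableEq α] (u x : List α) : ℕ :=
  ((List.range (u.length + 1)).filter (fun i => decide (x <+: u.drop i))).length

/-- `k`-Abelian equivalence: same number of occurrences of every word of length at most `k`. -/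
def KAbEq {α : Type*} [DecidableEq α] (k : ℕ) (u v : List α) : Prop :=
  ∀ x : List α, x.length ≤ k → occ u x = occ v x

/-- The factor of the infinite word `w` of length `n` starting at position `i`. -/
def factorAt {α : Type*} (w : ℕ → α) (i n : ℕ) : List α :=
  (List.range n).map (fun j => w (i + j))

/-- `k`-Abelian complexity: the number of `k`-Abelian classes of length-`n` factors of `w`. -/
noncomputable def rho {α : Type*} [DecidableEq α] (k : ℕ) (w : ℕ → α) (n : ℕ) : ℕ :=
  Set.ncard { C : Set (List α) | ∃ i : ℕ,
    C = { v | (∃ j : ℕ, v = factorAt w j n) ∧ KAbEq k v (factorAt w i n) } }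

lemma occ_nil (u : List Bool) : occ u [] = u.length + 1 := by
  simp [occ, List.nil_prefix]

lemma occ_cons (c : Bool) (u x : List Bool) :
    occ (c :: u) x = occ u x + (if x <+: (c :: u) then 1 else 0) := by
  unfold occ
  have h1 : (c::u).length + 1 = u.length + 1 + 1 := rfl
  rw [h1, List.range_succ_eq_map, List.filter_cons]
  by_cases h : x <+: (c::u) <;>
    simp [h, List.filter_map, Function.comp_def, List.drop_succ_cons, Nat.add_comm]

lemma occ_one (c : Bool) (u : List Bool) (a : Bool) :
    occ (c::u) [a] = occ u [a] + (if a = c then 1 else 0) := by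
  rw [occ_cons]
  congr 1
  simp [List.cons_prefix_cons]

lemma occ_two (c d : Bool) (u : List Bool) (a b : Bool) :
    occ (c::d::u) [a,b] = occ (d::u) [a,b] + (if a = c ∧ b = d then 1 else 0) := by
  rw [occ_cons]
  congr 1
  simp [List.cons_prefix_cons]

lemma key (u : List Bool) : ∃ r0 r1 : ℕ,
    u.length = occ u [false,false] + occ u [true,true] + r0 + r1 ∧
    occ u [false] = occ u [false,false] + r0 ∧
    occ u [true] = occ u [true,true] + r1 ∧
    occ u [true,false] + (if u.head? = some false then 1 else 0) = r0 ∧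
    occ u [false,true] + (if u.head? = some true then 1 else 0) = r1 ∧
    (match u.head? with
     | none => r0 = 0 ∧ r1 = 0
     | some false => r0 = r1 ∨ r0 = r1 + 1
     | some true => r1 = r0 ∨ r1 = r0 + 1) := by
  induction u with
  | nil => exact ⟨0, 0, by simp [occ]⟩
  | cons c t ih =>
    obtain ⟨r0, r1, h1, h2, h3, h4, h5, h6⟩ := ih
    rcases t with _ | ⟨b, t'⟩
    · rcases c
      · exact ⟨1, 0, by simp [occ, List.range_succ]⟩
      · exact ⟨0, 1, by simp [occ, List.range_succ]⟩
    · simp only [List.head?_cons] at h4 h5 h6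
      have e1 := occ_one c (b::t') false
      have e2 := occ_one c (b::t') true
      have e3 := occ_two c b t' false false
      have e4 := occ_two c b t' false true
      have e5 := occ_two c b t' true false
      have e6 := occ_two c b t' true true
      rcases c <;> rcases b
      · exact ⟨r0, r1, by simp_all; omega⟩
      · exact ⟨r0 + 1, r1, by simp_all; omega⟩
      · exact ⟨r0, r1 + 1, by simp_all; omega⟩
      · exact ⟨r0, r1, by simp_all; omega⟩

theorem stmt0 (u v : List Bool) :
    KAbEq 2 u v ↔
      u.length = v.length ∧
      occ u [false, false] = occ v [false, false] ∧
      occ u [true, true] = occ v [true, true] ∧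
      u.head? = v.head? := by
  obtain ⟨p0, p1, ku1, ku2, ku3, ku4, ku5, ku6⟩ := key u
  obtain ⟨q0, q1, kv1, kv2, kv3, kv4, kv5, kv6⟩ := key v
  constructor
  · intro h
    have hn := h [] (by simp)
    rw [occ_nil, occ_nil] at hn
    have hFF := h [false, false] (by simp)
    have hTT := h [true, true] (by simp)
    have hF := h [false] (by simp)
    have hT := h [true] (by simp)
    have hTF := h [true, false] (by simp)
    have hFT := h [false, true] (by simp)
    refine ⟨by omega, hFF, hTT, ?_⟩
    rcases u with _ | ⟨a, u'⟩ <;> rcases v with _ | ⟨b, v'⟩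
    · rfl
    · simp at hn
    · simp at hn
    · simp only [List.head?_cons] at *
      rcases a <;> rcases b <;> simp_all
  · rintro ⟨hn, hFF, hTT, hh⟩
    rw [hh] at ku4 ku5 ku6
    have hr : p0 = q0 ∧ p1 = q1 := by
      rcases hv : v.head? with _ | b
      · rw [hv] at ku6 kv6; simp at ku6 kv6; omega
      · rcases b <;> (rw [hv] at ku4 ku5 ku6 kv4 kv5 kv6; simp at *; omega)
    intro x hx
    rcases x with _ | ⟨a, _ | ⟨b, _ | ⟨c, t⟩⟩⟩
    · rw [occ_nil, occ_nil, hn]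
    · rcases a <;> omega
    · rcases a <;> rcases b <;> omega
    · simp at hx
end

section
/- Let τ be the Thue–Morse morphism on {0,1}* defined by τ(0) = 01, τ(1) = 10. In the image τ(w) of any word w, between any two occurrences of the factor 00 there is an occurrence of the factor 11, and between any two occurrences of 11 there is an occurrence of 00. Consequently, for any factor u of τ(w), the numbers |u|_{00} and |u|_{11} differ by at most one. -/
/-- The Thue–Morse morphism `0 ↦ 01`, `1 ↦ 10`. -/
def tauM : List Bool → List Bool :=
  fun w => w.flatMap (fun a => if a then [true, false] else [false, true])


lemma tauM_cons (a : Bool) (w : List Bool) :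
    tauM (a :: w) = (if a then [true, false] else [false, true]) ++ tauM w := rfl

lemma tauM_drop_two_mul : ∀ (m : ℕ) (w : List Bool), (tauM w).drop (2*m) = tauM (w.drop m)
  | 0, w => by simp
  | m+1, [] => by simp [tauM]
  | m+1, a :: w => by
      have h1 : (tauM (a :: w)).drop 2 = tauM w := by cases a <;> rfl
      have h2 : 2*(m+1) = 2*m + 2 := by ring
      calc (tauM (a::w)).drop (2*(m+1)) = ((tauM (a::w)).drop 2).drop (2*m) := by
            rw [List.drop_drop]; congr 1; omega
        _ = tauM (w.drop m) := by rw [h1, tauM_drop_two_mul m w]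
        _ = tauM ((a::w).drop (m+1)) := rfl

lemma occ_char (w : List Bool) (x : Bool) (i : ℕ) :
    [x, x] <+: (tauM w).drop i ↔
      ∃ m, i = 2*m+1 ∧ m+1 < w.length ∧ w.getD m false = !x ∧ w.getD (m+1) false = x := by
  rcases Nat.even_or_odd i with ⟨m, hm⟩ | ⟨m, hm⟩
  · have hi : i = 2*m := by omega
    subst hi
    rw [tauM_drop_two_mul]
    constructor
    · intro h
      exfalso
      cases hd : w.drop m with
      | nil => rw [hd] at h; simpa [tauM] using h.length_le
      | cons a rest =>
          rw [hd, tauM_cons] at h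
          cases a <;> cases x <;> simp [List.cons_prefix_cons] at h
    · rintro ⟨m', hm', _⟩; omega
  · have hi : i = 2*m+1 := by omega
    subst hi
    have hdrop : (tauM w).drop (2*m+1) = (tauM (w.drop m)).drop 1 := by
      rw [← tauM_drop_two_mul, ← List.drop_drop]
    rw [hdrop]
    cases hd : w.drop m with
    | nil =>
        have hlen : w.length ≤ m := List.drop_eq_nil_iff.mp hd
        simp only [tauM, List.flatMap_nil, List.drop_nil]
        constructor
        · intro h; simpa using h.length_le
        · rintro ⟨m', hm', hlt, _⟩
          omega
    | cons a rest =>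
        have hma : w[m]? = some a := by
          rw [← List.head?_drop, hd]; rfl
        have hrest : w.drop (m+1) = rest := by
          have : w.drop (m+1) = (w.drop m).drop 1 := by rw [List.drop_drop]
          rw [this, hd]; rfl
        have hmlen : m < w.length := by
          by_contra h
          rw [List.drop_eq_nil_iff.mpr (by omega)] at hd
          exact List.cons_ne_nil _ _ hd.symm
        have hgm : w.getD m false = a := by
          simp [List.getD_eq_getElem?_getD, hma]
        cases hr : rest with
        | nil =>
            have hlen : w.length ≤ m + 1 := by
              have := List.drop_eq_nil_iff.mp (by rw [hrest, hr])
              omega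
            rw [tauM_cons]
            constructor
            · intro h
              exfalso
              cases a <;> cases x <;> simp [tauM, List.cons_prefix_cons] at h
            · rintro ⟨m', hm', hlt, _⟩
              omega
        | cons b rest2 =>
            have hmb : w[m+1]? = some b := by
              rw [← List.head?_drop, hrest, hr]; rfl
            have hgb : w.getD (m+1) false = b := by
              simp [List.getD_eq_getElem?_getD, hmb]
            have hm1len : m + 1 < w.length := by
              by_contra h
              rw [List.drop_eq_nil_iff.mpr (by omega)] at hrest
              rw [hr] at hrest; exact List.cons_ne_nil _ _ hrest.symm
            subst hr
            rw [tauM_cons, tauM_cons]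
            constructor
            · intro h
              refine ⟨m, rfl, hm1len, ?_⟩
              rw [hgm, hgb]
              cases a <;> cases b <;> cases x <;> simp [List.cons_prefix_cons] at h ⊢
            · rintro ⟨m', hm', _, h1, h2⟩
              have hmm : m' = m := by omega
              subst hmm
              rw [hgm] at h1; rw [hgb] at h2
              cases a <;> cases b <;> cases x <;>
                first
                  | exact absurd h1 (by decide)
                  | exact absurd h2 (by decide)
                  | simp [List.cons_prefix_cons]

lemma switch_lemma (f : ℕ → Bool) (x : Bool) : ∀ b a, a < b → f a = x → f b = !x →
    ∃ p, a ≤ p ∧ p < b ∧ f p = x ∧ f (p+1) = !x := by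
  intro b
  induction b with
  | zero => intro a h; omega
  | succ b ih =>
    intro a hab hfa hfb
    rcases Nat.lt_succ_iff_lt_or_eq.mp hab with h | rfl
    · by_cases hb : f b = x
      · exact ⟨b, Nat.le_of_lt h, Nat.lt_succ_self b, hb, hfb⟩
      · have hb' : f b = !x := by cases hfb' : f b <;> cases x <;> simp_all
        obtain ⟨p, h1, h2, h3, h4⟩ := ih a h hfa hb'
        exact ⟨p, h1, Nat.lt_succ_of_lt h2, h3, h4⟩
    · exact ⟨a, le_refl a, Nat.lt_succ_self a, hfa, hfb⟩

lemma tau_alt (w : List Bool) (x : Bool) (i j : ℕ) (hij : i < j)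
    (hi : [x, x] <+: (tauM w).drop i) (hj : [x, x] <+: (tauM w).drop j) :
    ∃ l, i < l ∧ l < j ∧ [!x, !x] <+: (tauM w).drop l := by
  obtain ⟨m, rfl, hmlen, hm1, hm2⟩ := (occ_char w x i).mp hi
  obtain ⟨m', hj', hmlen', hm1', hm2'⟩ := (occ_char w x j).mp hj
  subst hj'
  have hmm : m + 1 ≤ m' := by omega
  have hne : m + 1 ≠ m' := by
    intro h; rw [h] at hm2; rw [hm2] at hm1'; cases x <;> simp at hm1'
  obtain ⟨p, hp1, hp2, hp3, hp4⟩ :=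
    switch_lemma (fun n => w.getD n false) x m' (m+1) (by omega) hm2 hm1'
  refine ⟨2*p+1, by omega, by omega, ?_⟩
  exact (occ_char w (!x) (2*p+1)).mpr ⟨p, rfl, by omega, by simpa using hp3, hp4⟩

lemma prefix_append_iff' {p a b : List Bool} (h : p.length ≤ a.length) :
    p <+: a ++ b ↔ p <+: a := by
  constructor
  · intro hp
    rw [List.prefix_iff_eq_take] at hp ⊢
    rwa [List.take_append_of_le_length h] at hp
  · exact fun hp => hp.trans (List.prefix_append a b)

lemma shift_iff (s u t L : List Bool) (h : s ++ u ++ t = L) (x : Bool) (i : ℕ)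
    (hi : i + 2 ≤ u.length) :
    ([x, x] <+: u.drop i ↔ [x, x] <+: L.drop (s.length + i)) := by
  have hL : L.drop (s.length + i) = u.drop i ++ t := by
    rw [← h, List.append_assoc, List.drop_append,
      List.drop_eq_nil_of_le (show s.length ≤ s.length + i by omega),
      List.nil_append, show s.length + i - s.length = i from by omega,
      List.drop_append, show i - u.length = 0 from by omega, List.drop_zero]
  rw [hL]
  exact (prefix_append_iff' (by simp; omega)).symm

lemma alt_card (A B : Finset ℕ)
    (h : ∀ a ∈ A, ∀ a' ∈ A, a < a' → ∃ b ∈ B, a < b ∧ b < a') :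
    A.card ≤ B.card + 1 := by
  rcases A.eq_empty_or_nonempty with rfl | hA
  · simp
  set M := A.max' hA with hM
  have key : ∀ a ∈ A.erase M, ∃ b, b ∈ B ∧ a < b ∧ ∀ a' ∈ A, a < a' → b < a' := by
    intro a ha
    have haA := Finset.mem_of_mem_erase ha
    have haM : a < M := lt_of_le_of_ne (A.le_max' a haA) (Finset.ne_of_mem_erase ha)
    have hS : (A.filter (fun a' => a < a')).Nonempty :=
      ⟨M, Finset.mem_filter.2 ⟨A.max'_mem hA, haM⟩⟩
    set nxt := (A.filter (fun a' => a < a')).min' hS with hnxtdef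
    obtain ⟨hnA, hlt⟩ := Finset.mem_filter.1 ((A.filter (fun a' => a < a')).min'_mem hS)
    obtain ⟨b, hbB, hab, hbn⟩ := h a haA nxt hnA hlt
    refine ⟨b, hbB, hab, fun a' ha' hlt' => lt_of_lt_of_le hbn ?_⟩
    exact (A.filter (fun a' => a < a')).min'_le a' (Finset.mem_filter.2 ⟨ha', hlt'⟩)
  choose f hfB hfa hfub using key
  have hinj : Set.InjOn (fun a => if ha : a ∈ A.erase M then f a ha else 0) (A.erase M) := by
    intro a1 h1 a2 h2 heq
    rw [Finset.mem_coe] at h1 h2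
    simp only [dif_pos h1, dif_pos h2] at heq
    by_contra hne
    rcases lt_or_gt_of_ne hne with hlt | hlt
    · have := hfub a1 h1 a2 (Finset.mem_of_mem_erase h2) hlt
      have := hfa a2 h2
      omega
    · have := hfub a2 h2 a1 (Finset.mem_of_mem_erase h1) hlt
      have := hfa a1 h1
      omega
  have hcard : (A.erase M).card ≤ B.card := by
    apply Finset.card_le_card_of_injOn _ _ hinj
    intro a ha
    simp only [dif_pos ha]
    have ha' : a ∈ A.erase M := Finset.mem_coe.mp ha
    rw [dif_pos ha']
    exact hfB a ha'
  have h1 : (A.erase M).card = A.card - 1 := Finset.card_erase_of_mem (A.max'_mem hA)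
  have h2 : 0 < A.card := Finset.card_pos.2 hA
  omega

lemma occ_eq_card {α : Type*} [DecidableEq α] (u x : List α) :
    ((List.range (u.length + 1)).filter (fun i => decide (x <+: u.drop i))).length
      = ((Finset.range (u.length + 1)).filter (fun i => x <+: u.drop i)).card := rfl


theorem stmt3 (w : List Bool) :
    (∀ i j : ℕ, i < j →
      [false, false] <+: (tauM w).drop i → [false, false] <+: (tauM w).drop j →
      ∃ l, i < l ∧ l < j ∧ [true, true] <+: (tauM w).drop l) ∧
    (∀ i j : ℕ, i < j →
      [true, true] <+: (tauM w).drop i → [true, true] <+: (tauM w).drop j →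
      ∃ l, i < l ∧ l < j ∧ [false, false] <+: (tauM w).drop l) ∧
    (∀ u : List Bool, u <:+: tauM w →
      |(occ u [false, false] : ℤ) - (occ u [true, true] : ℤ)| ≤ 1) := by
  refine ⟨?_, ?_, ?_⟩
  · intro i j hij hi hj
    simpa using tau_alt w false i j hij hi hj
  · intro i j hij hi hj
    simpa using tau_alt w true i j hij hi hj
  · intro u hu
    obtain ⟨s, t, hst⟩ := hu
    have key : ∀ (x : Bool) i j, i < j → [x,x] <+: u.drop i → [x,x] <+: u.drop j →
        ∃ l, i < l ∧ l < j ∧ [!x,!x] <+: u.drop l := by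
      intro x i j hij hi hj
      have hiu : i + 2 ≤ u.length := by
        have := hi.length_le; simp at this; omega
      have hju : j + 2 ≤ u.length := by
        have := hj.length_le; simp at this; omega
      have hi' := (shift_iff s u t _ hst x i hiu).mp hi
      have hj' := (shift_iff s u t _ hst x j hju).mp hj
      obtain ⟨l, hl1, hl2, hl3⟩ := tau_alt w x _ _ (by omega) hi' hj'
      refine ⟨l - s.length, by omega, by omega, ?_⟩
      have hls : l = s.length + (l - s.length) := by omega
      rw [hls] at hl3
      exact (shift_iff s u t _ hst (!x) (l - s.length) (by omega)).mpr hl3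
    set A := (Finset.range (u.length + 1)).filter (fun i => [false,false] <+: u.drop i) with hA
    set B := (Finset.range (u.length + 1)).filter (fun i => [true,true] <+: u.drop i) with hB
    have hAB : A.card ≤ B.card + 1 := by
      apply alt_card
      intro a ha a' ha' hlt
      rw [hA, Finset.mem_filter] at ha
      rw [hA, Finset.mem_filter] at ha'
      obtain ⟨b, hb1, hb2, hb3⟩ := key false a a' hlt ha.2 ha'.2
      refine ⟨b, ?_, hb1, hb2⟩
      rw [hB, Finset.mem_filter]
      exact ⟨Finset.mem_range.2 (by have := Finset.mem_range.1 ha'.1; omega), hb3⟩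
    have hBA : B.card ≤ A.card + 1 := by
      apply alt_card
      intro a ha a' ha' hlt
      rw [hB, Finset.mem_filter] at ha
      rw [hB, Finset.mem_filter] at ha'
      obtain ⟨b, hb1, hb2, hb3⟩ := key true a a' hlt ha.2 ha'.2
      refine ⟨b, ?_, hb1, hb2⟩
      rw [hA, Finset.mem_filter]
      exact ⟨Finset.mem_range.2 (by have := Finset.mem_range.1 ha'.1; omega), hb3⟩
    simp only [occ]
    rw [occ_eq_card, occ_eq_card, ← hA, ← hB, abs_le]
    omega
end
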